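/- For all N, κ > 0 there is a constant c_{N,κ} > 0, depending only on η, N and κ, such that for every positive harmonic function H on S', every N-sparse subset Z of S (points counted with multiplicity) and every subset Z' of S such that Z is κ-dominated by Z', one has Σ_{ζ ∈ Z} H(ζ) ≤ c_{N,κ} Σ_{ζ' ∈ Z'} H(ζ') (the right-hand sum also counted with multiplicity). -/

import Mathlib

open MeasureTheory Filter Set
open scoped ENNReal Topology
open Metric
open scoped NNReal

noncomputable section

/-- `η = a + ib`. -/
def etaC (a b : ℝ) : ℂ := (a : ℂ) + (b : ℂ) * Complex.I

/-- The open sector `S = {u+iv : v > 0, bu + av > 0}`. -/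
def sectorS (a b : ℝ) : Set ℂ := {z : ℂ | 0 < z.im ∧ 0 < b * z.re + a * z.im}

/-- The larger sector `S' = {u+iv : v > -log 3, bu + av > -log 3}`. -/
def sectorS' (a b : ℝ) : Set ℂ :=
  {z : ℂ | -Real.log 3 < z.im ∧ -Real.log 3 < b * z.re + a * z.im}

/-- A real-valued function on `ℂ` is harmonic on a set: it is `C²` there and its Laplacian
(the sum of the second derivatives in the directions `1` and `i`) vanishes. -/
def HarmonicOnSet (f : ℂ → ℝ) (U : Set ℂ) : Prop :=
  ContDiffOn ℝ 2 f U ∧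
    ∀ z ∈ U, (iteratedFDeriv ℝ 2 f z) ![1, 1] + (iteratedFDeriv ℝ 2 f z) ![Complex.I, Complex.I] = 0

/-- A positive harmonic function on the sector `S'`. -/
def PosHarmonic (a b : ℝ) (H : ℂ → ℝ) : Prop :=
  (∀ z ∈ sectorS' a b, 0 < H z) ∧ HarmonicOnSet H (sectorS' a b)

/-- The exponent `γ = π/θ₀`, where `θ₀ = arg(-η̄) ∈ (0,π)` is the opening angle of `S`. -/
def gammaExp (a b : ℝ) : ℝ := Real.pi / Complex.arg (((-a : ℝ) : ℂ) + (b : ℂ) * Complex.I)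

/-- `c`-admissibility of a function `H` on `S'`: there is `H̃` with `H̃ ∘ Φ = H` on `S`
(where `Φ(ζ) = ζ^γ`), continuous on the closed upper half-plane, bounded by `c` on `ℝ`,
with `∫_ℝ H̃(t)|t|^{-1+1/γ} dt ≤ c`, and satisfying the Poisson formula. -/
def Admissible (a b c : ℝ) (H : ℂ → ℝ) : Prop :=
  ∃ Ht : ℂ → ℝ,
    ContinuousOn Ht {z : ℂ | 0 ≤ z.im} ∧
    (∀ ζ ∈ sectorS a b, Ht (ζ ^ ((gammaExp a b : ℝ) : ℂ)) = H ζ) ∧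
    (∀ t : ℝ, Ht (t : ℂ) ≤ c) ∧
    Integrable (fun t : ℝ => Ht (t : ℂ) * |t| ^ (-1 + 1 / gammaExp a b)) ∧
    (∫ t : ℝ, Ht (t : ℂ) * |t| ^ (-1 + 1 / gammaExp a b)) ≤ c ∧
    (∀ U V : ℝ, 0 < V →
      Ht ((U : ℂ) + (V : ℂ) * Complex.I) =
        (1 / Real.pi) * ∫ t : ℝ, Ht (t : ℂ) * (V / (V ^ 2 + (t - U) ^ 2)))

/-- The point `-η̄ b⁻¹ s + l` on the half-line `Λ_{1,s}`. -/
def lam1pt (a b s l : ℝ) : ℂ :=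
  -(starRingEnd ℂ (etaC a b)) * ((s / b : ℝ) : ℂ) + (l : ℂ)

/-- The point `b⁻¹ s - η̄ l` on the half-line `Λ_{2,s}`. -/
def lam2pt (a b s l : ℝ) : ℂ :=
  ((s / b : ℝ) : ℂ) - (starRingEnd ℂ (etaC a b)) * (l : ℂ)


/-- A collection of points with multiplicities (encoded as a multiplicity function
`Z : α → ℕ`) is `N`-sparse if every open ball of radius `1` contains at most `N` of its
points counted with multiplicity. -/
def NSparse {α : Type*} [PseudoMetricSpace α] (N : ℝ) (Z : α → ℕ) : Prop :=
  ∀ x : α,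
    (∑' y : α, Set.indicator (Metric.ball x 1) (fun y => ((Z y : ℝ≥0∞))) y) ≤ ENNReal.ofReal N

/-- `Z` is `κ`-dominated by `Z'` (both with multiplicities): every point of `Z` lies at
distance at most `κ` from some point of `Z'`. -/
def DomBy {α : Type*} [PseudoMetricSpace α] (κ : ℝ) (Z Z' : α → ℕ) : Prop :=
  ∀ x, Z x ≠ 0 → ∃ y, Z' y ≠ 0 ∧ dist x y ≤ κ



section AuxHarnack

/-- The "complex gradient" `∂H/∂x - i ∂H/∂y`. -/
def gradC (H : ℂ → ℝ) (z : ℂ) : ℂ :=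
  ((fderiv ℝ H z 1 : ℝ) : ℂ) - Complex.I * ((fderiv ℝ H z Complex.I : ℝ) : ℂ)

lemma clm_apply_basis {F : Type*} [NormedAddCommGroup F] [NormedSpace ℝ F]
    (L : ℂ →L[ℝ] F) (w : ℂ) : L w = w.re • L 1 + w.im • L Complex.I := by
  have hw : w = w.re • (1 : ℂ) + w.im • Complex.I := by
    simp [Complex.real_smul, Complex.re_add_im]
  conv_lhs => rw [hw]
  rw [L.map_add, L.map_smul, L.map_smul]

lemma hasDerivAt_gradC {H : ℂ → ℝ} {U : Set ℂ} (hU : IsOpen U) (hH : HarmonicOnSet H U)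
    {z : ℂ} (hz : z ∈ U) : DifferentiableAt ℂ (gradC H) z := by
  have hct : ContDiffAt ℝ 2 H z := hH.1.contDiffAt (hU.mem_nhds hz)
  have h2 : ContDiffAt ℝ 1 (fderiv ℝ H) z := hct.fderiv_right (by norm_num)
  have hdA : HasFDerivAt (fderiv ℝ H) (fderiv ℝ (fderiv ℝ H) z) z :=
    (h2.differentiableAt (by norm_num)).hasFDerivAt
  set A := fderiv ℝ (fderiv ℝ H) z with hA
  have hsym : A Complex.I 1 = A 1 Complex.I := (hct.isSymmSndFDerivAt (by norm_num)).eq _ _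
  have hlap : A 1 1 + A Complex.I Complex.I = 0 := by
    have := hH.2 z hz
    rwa [iteratedFDeriv_two_apply, iteratedFDeriv_two_apply] at this
  -- φ : (ℂ →L[ℝ] ℝ) →L[ℝ] ℂ
  set φ : (ℂ →L[ℝ] ℝ) →L[ℝ] ℂ :=
    Complex.ofRealCLM.comp (ContinuousLinearMap.apply ℝ ℝ (1 : ℂ)) -
      Complex.I • (Complex.ofRealCLM.comp (ContinuousLinearMap.apply ℝ ℝ (Complex.I))) with hφ
  have hφapp : ∀ L : ℂ →L[ℝ] ℝ, φ L = ((L 1 : ℝ) : ℂ) - Complex.I * ((L Complex.I : ℝ) : ℂ) := by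
    intro L
    simp [hφ, smul_eq_mul]
  have hg : gradC H = fun w => φ (fderiv ℝ H w) := by
    funext w; rw [hφapp]; rfl
  have hreal : HasFDerivAt (gradC H) (φ.comp A) z := by
    rw [hg]; exact φ.hasFDerivAt.comp z hdA
  set d : ℂ := ((A 1 1 : ℝ) : ℂ) - Complex.I * ((A 1 Complex.I : ℝ) : ℂ) with hd
  have key : HasFDerivAt (gradC H) (d • (1 : ℂ →L[ℂ] ℂ)) z := by
    apply hasFDerivAt_of_restrictScalars ℝ hreal
    ext w
    have hAw : A w = w.re • A 1 + w.im • A Complex.I := clm_apply_basis A w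
    have h1 : A w 1 = w.re * A 1 1 + w.im * A Complex.I 1 := by
      rw [hAw]; simp [smul_eq_mul]
    have h2' : A w Complex.I = w.re * A 1 Complex.I + w.im * A Complex.I Complex.I := by
      rw [hAw]; simp [smul_eq_mul]
    simp only [ContinuousLinearMap.coe_restrictScalars', ContinuousLinearMap.smul_apply,
      ContinuousLinearMap.one_apply, ContinuousLinearMap.coe_comp', Function.comp_apply]
    have hII : A Complex.I Complex.I = -A 1 1 := by linarith
    rw [hφapp, h1, h2', hsym, hII, hd, smul_eq_mul]
    push_cast
    simp only [Complex.ext_iff, Complex.mul_re, Complex.mul_im, Complex.sub_re, Complex.sub_im,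
      Complex.add_re, Complex.add_im, Complex.I_re, Complex.I_im, Complex.ofReal_re,
      Complex.ofReal_im, Complex.neg_re, Complex.neg_im]
    constructor <;> ring
  exact key.differentiableAt


/-- A holomorphic function on a disc has a primitive on any smaller ball. -/
lemma exists_primitive {g : ℂ → ℂ} {c : ℂ} {R r₁ : ℝ≥0} (hR : 0 < R) (hr₁ : 0 < r₁)
    (hr₁R : r₁ < R) (hd : DifferentiableOn ℂ g (closedBall c R)) :
    ∃ F : ℂ → ℂ, F c = 0 ∧ ∀ z ∈ ball c (r₁ : ℝ), HasDerivAt F (g z) z := by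
  obtain ⟨p, hp⟩ : ∃ p, HasFPowerSeriesOnBall g p c R := ⟨_, hd.hasFPowerSeriesOnBall hR⟩
  set f : ℕ → ℂ → ℂ := fun n z => ((n + 1 : ℕ) : ℂ)⁻¹ * p.coeff n * (z - c) ^ (n + 1) with hf
  set f' : ℕ → ℂ → ℂ := fun n z => p.coeff n * (z - c) ^ n with hf'
  set u : ℕ → ℝ := fun n => ‖p n‖ * (r₁ : ℝ) ^ n with hu
  have hradius : (r₁ : ℝ≥0∞) < p.radius :=
    lt_of_lt_of_le (by exact_mod_cast hr₁R) hp.r_le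
  have hu_sum : Summable u := p.summable_norm_mul_pow hradius
  have hderiv : ∀ n y, y ∈ ball c (r₁ : ℝ) → HasDerivAt (f n) (f' n y) y := by
    intro n y _
    have h0 : HasDerivAt (fun z : ℂ => z - c) 1 y := (hasDerivAt_id y).sub_const c
    have h1 : HasDerivAt (fun z : ℂ => (z - c) ^ (n + 1))
        (((n : ℂ) + 1) * (y - c) ^ n * 1) y := by
      simpa using h0.fun_pow (n + 1)
    have h2 := h1.const_mul (((n + 1 : ℕ) : ℂ)⁻¹ * p.coeff n)
    refine h2.congr_deriv ?_
    have hne : ((n : ℂ) + 1) ≠ 0 := Nat.cast_add_one_ne_zero n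
    push_cast
    field_simp
    ring
  have hbound : ∀ n y, y ∈ ball c (r₁ : ℝ) → ‖f' n y‖ ≤ u n := by
    intro n y hy
    have hc : ‖p.coeff n‖ ≤ ‖p n‖ := by
      calc ‖p.coeff n‖ ≤ ‖p n‖ * ∏ _i : Fin n, ‖(1 : ℂ)‖ := (p n).le_opNorm _
        _ = ‖p n‖ := by simp
    have hyc : ‖y - c‖ ≤ (r₁ : ℝ) := by
      rw [mem_ball, dist_eq_norm] at hy; exact hy.le
    calc ‖f' n y‖ = ‖p.coeff n‖ * ‖y - c‖ ^ n := by simp [hf', norm_mul, norm_pow]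
      _ ≤ ‖p n‖ * (r₁ : ℝ) ^ n :=
        mul_le_mul hc (pow_le_pow_left₀ (norm_nonneg _) hyc n) (by positivity) (norm_nonneg _)
  have hc_mem : c ∈ ball c (r₁ : ℝ) := mem_ball_self (by exact_mod_cast hr₁)
  have hf0 : Summable fun n => f n c := by
    have : (fun n => f n c) = fun _ => 0 := by
      funext n; simp [hf]
    rw [this]; exact summable_zero
  refine ⟨fun z => ∑' n, f n z, ?_, ?_⟩
  · have : ∀ n, f n c = 0 := fun n => by simp [hf]
    simp [this]
  · intro z hz
    have := hasDerivAt_tsum_of_isPreconnected hu_sum isOpen_ball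
      (convex_ball c (r₁ : ℝ)).isPreconnected hderiv hbound hc_mem hf0 hz
    refine this.congr_deriv ?_
    -- g z = ∑' n, f' n z
    have hzball : z - c ∈ Metric.eball (0 : ℂ) R := by
      rw [EMetric.mem_ball, edist_zero_right]
      have h1 : ‖z - c‖ < (r₁ : ℝ) := by rwa [mem_ball, dist_eq_norm] at hz
      have h2 : ‖z - c‖₊ < r₁ := by exact_mod_cast h1
      calc (‖z - c‖₊ : ℝ≥0∞) < (r₁ : ℝ≥0∞) := by exact_mod_cast h2
        _ < (R : ℝ≥0∞) := by exact_mod_cast hr₁R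
    have hs := hp.hasSum hzball
    have heq : (fun n => p n fun _ => z - c) = fun n => f' n z := by
      funext n
      rw [p.apply_eq_pow_smul_coeff, smul_eq_mul, hf']
      ring
    rw [heq] at hs
    rw [add_sub_cancel] at hs
    exact hs.tsum_eq

lemma harmonic_rep {H : ℂ → ℝ} {U : Set ℂ} (hU : IsOpen U) (hH : HarmonicOnSet H U)
    {c : ℂ} {R r₁ : ℝ≥0} (hR : 0 < R) (hr₁ : 0 < r₁) (hr₁R : r₁ < R)
    (hball : closedBall c (R : ℝ) ⊆ U) :
    ∃ f : ℂ → ℂ, DifferentiableOn ℂ f (ball c (r₁ : ℝ)) ∧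
      (∀ z ∈ ball c (r₁ : ℝ), (f z).re = H z) ∧ f c = ((H c : ℝ) : ℂ) := by
  have hgd : DifferentiableOn ℂ (gradC H) (closedBall c (R : ℝ)) := fun z hz =>
    (hasDerivAt_gradC hU hH (hball hz)).differentiableWithinAt
  obtain ⟨F, hFc, hFd⟩ := exists_primitive hR hr₁ hr₁R hgd
  set f : ℂ → ℂ := fun z => F z + ((H c : ℝ) : ℂ) with hf
  have hball₁ : ball c (r₁ : ℝ) ⊆ U := fun z hz => hball
    ((ball_subset_closedBall.trans (closedBall_subset_closedBall (by exact_mod_cast hr₁R.le))) hz)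
  have hfd : ∀ z ∈ ball c (r₁ : ℝ), HasDerivAt f (gradC H z) z := fun z hz =>
    (hFd z hz).add_const _
  refine ⟨f, fun z hz => ((hfd z hz).differentiableAt).differentiableWithinAt, ?_,
    by simp [hf, hFc]⟩
  set ψ : ℂ → ℝ := fun z => H z - (f z).re with hψ
  have hψd : ∀ z ∈ ball c (r₁ : ℝ), HasFDerivWithinAt ψ (0 : ℂ →L[ℝ] ℝ)
      (ball c (r₁ : ℝ)) z := by
    intro z hz
    set DH := fderiv ℝ H z with hDH
    have hHd : HasFDerivAt H DH z :=
      ((hH.1.contDiffAt (hU.mem_nhds (hball₁ hz))).differentiableAt (by norm_num)).hasFDerivAt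
    set L : ℂ →L[ℝ] ℝ := Complex.reCLM.comp
      (((1 : ℂ →L[ℂ] ℂ).smulRight (gradC H z)).restrictScalars ℝ) with hL
    have hRe : HasFDerivAt (fun w => (f w).re) L z :=
      Complex.reCLM.hasFDerivAt.comp z ((hfd z hz).hasFDerivAt.restrictScalars ℝ)
    have hsub : HasFDerivAt ψ (DH - L) z := hHd.sub hRe
    have hzero : DH - L = 0 := by
      ext w
      have h1 : DH w = w.re • DH 1 + w.im • DH Complex.I := clm_apply_basis DH w
      have h2 : L w = (gradC H z * w).re := by
        simp [hL, smul_eq_mul, mul_comm]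
      simp only [ContinuousLinearMap.sub_apply, ContinuousLinearMap.zero_apply, h1, h2,
        smul_eq_mul, gradC, Complex.mul_re, Complex.sub_re, Complex.sub_im, Complex.mul_im,
        Complex.ofReal_re, Complex.ofReal_im, Complex.I_re, Complex.I_im]
      ring
    rw [hzero] at hsub
    exact hsub.hasFDerivWithinAt
  intro z hz
  have hc_mem : c ∈ ball c (r₁ : ℝ) := mem_ball_self (by exact_mod_cast hr₁)
  have := (convex_ball c (r₁ : ℝ)).norm_image_sub_le_of_norm_hasFDerivWithin_le (C := 0) hψd
    (fun x _ => by simp) hc_mem hz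
  have hψc : ψ c = 0 := by simp [hψ, hf, hFc]
  have hψz : ψ z = 0 := by
    have h0 : ‖ψ z - ψ c‖ ≤ 0 := by simpa using this
    have := norm_nonneg (ψ z - ψ c)
    have : ψ z = ψ c := by
      have := le_antisymm h0 (norm_nonneg _)
      simpa [sub_eq_zero] using norm_eq_zero.mp this
    rw [this, hψc]
  have : H z - (f z).re = 0 := hψz
  linarith

/-- Harnack inequality step: for positive harmonic `H` on `U ⊇ closedBall c R`,
`H c ≤ 4 * H z` whenever `dist z c ≤ R/5`. -/
lemma harnack_step {H : ℂ → ℝ} {U : Set ℂ} (hU : IsOpen U) (hH : HarmonicOnSet H U)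
    (hpos : ∀ z ∈ U, 0 < H z) {c z : ℂ} {R : ℝ} (hR : 0 < R)
    (hball : closedBall c R ⊆ U) (hz : dist z c ≤ R / 5) : H c ≤ 4 * H z := by
  have hcoeR : ((R.toNNReal : ℝ)) = R := Real.coe_toNNReal _ hR.le
  have hcoer : (((3/4 * R).toNNReal : ℝ)) = 3/4 * R := Real.coe_toNNReal _ (by linarith)
  obtain ⟨f, hfd, hfre, hfc⟩ := harmonic_rep hU hH (R := R.toNNReal)
    (r₁ := (3/4 * R).toNNReal)
    (by rw [← Real.toNNReal_pos] at hR; exact hR)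
    (by rw [Real.toNNReal_pos]; linarith)
    (by rw [Real.toNNReal_lt_toNNReal_iff hR]; linarith)
    (by rw [hcoeR]; exact hball)
  rw [hcoer] at hfd hfre
  set r₁ : ℝ := 3/4 * R with hr₁def
  have hc_mem : c ∈ U := hball (mem_closedBall_self hR.le)
  set a : ℝ := H c with ha
  have hapos : 0 < a := hpos c hc_mem
  have hsub : ball c r₁ ⊆ U := fun w hw => hball (mem_closedBall.mpr
    (le_trans (mem_ball.mp hw).le (by rw [hr₁def]; linarith)))
  have hreball : ∀ w ∈ ball c r₁, 0 < (f w).re := fun w hw => (hfre w hw) ▸ hpos w (hsub hw)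
  have hden : ∀ w ∈ ball c r₁, f w + (a : ℂ) ≠ 0 := by
    intro w hw h0
    have : (f w + (a : ℂ)).re = 0 := by rw [h0]; simp
    simp only [Complex.add_re, Complex.ofReal_re] at this
    have := hreball w hw
    linarith
  set φ : ℂ → ℂ := fun w => (f w - (a : ℂ)) / (f w + (a : ℂ)) with hφ
  have hφd : DifferentiableOn ℂ φ (ball c r₁) :=
    DifferentiableOn.div (hfd.sub (differentiableOn_const _))
      (hfd.add (differentiableOn_const _)) hden
  have hφc : φ c = 0 := by
    have hc_ball : c ∈ ball c r₁ := mem_ball_self (by positivity)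
    simp [hφ, hfc]
  have habs : ∀ w ∈ ball c r₁, ‖φ w‖ < 1 := by
    intro w hw
    have h1 : ‖f w - (a : ℂ)‖ < ‖f w + (a : ℂ)‖ := by
      rw [Complex.norm_def, Complex.norm_def]
      apply Real.sqrt_lt_sqrt (Complex.normSq_nonneg _)
      simp only [Complex.normSq_apply, Complex.sub_re, Complex.sub_im, Complex.add_re,
        Complex.add_im, Complex.ofReal_re, Complex.ofReal_im]
      have := hreball w hw
      nlinarith
    rw [hφ]
    simp only [norm_div]
    rw [div_lt_one (lt_of_le_of_lt (norm_nonneg _) h1)]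
    exact h1
  have hmaps : MapsTo φ (ball c r₁) (ball (φ c) 1) := by
    intro w hw
    rw [hφc, mem_ball, dist_zero_right]
    exact habs w hw
  have hz_ball : z ∈ ball c r₁ := by
    rw [mem_ball]
    have : r₁ = 3/4 * R := rfl
    linarith
  have hschwarz := Complex.dist_le_div_mul_dist_of_mapsTo_ball hφd (hmaps.mono_right ball_subset_closedBall) hz_ball
  rw [hφc, dist_zero_right] at hschwarz
  have hφz : ‖φ z‖ ≤ 4 / 15 := by
    calc ‖φ z‖ = ‖φ z‖ := rfl
      _ ≤ 1 / r₁ * dist z c := hschwarz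
      _ ≤ 1 / (3/4 * R) * (R / 5) := by
          apply mul_le_mul_of_nonneg_left hz (by positivity)
      _ = 4 / 15 := by field_simp; ring
  -- unwind
  set w : ℂ := f z with hw
  have hwre : w.re = H z := hfre z hz_ball
  have hwden : w + (a : ℂ) ≠ 0 := hden z hz_ball
  have hnum : w - (a : ℂ) = φ z * (w + (a : ℂ)) := by
    rw [hφ]; field_simp
    exact (mul_div_cancel_right₀ (w - (a : ℂ)) hwden).symm
  have hX : ‖w - (a : ℂ)‖ ≤ 4/15 * ‖w + (a : ℂ)‖ := by
    rw [hnum, norm_mul]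
    exact mul_le_mul_of_nonneg_right hφz (norm_nonneg _)
  have htri : ‖w + (a : ℂ)‖ ≤ ‖w - (a : ℂ)‖ + 2 * a := by
    have : w + (a : ℂ) = (w - (a : ℂ)) + (2 * a : ℝ) := by push_cast; ring
    rw [this]
    calc ‖(w - (a : ℂ)) + ((2 * a : ℝ) : ℂ)‖ ≤
        ‖w - (a : ℂ)‖ + ‖((2 * a : ℝ) : ℂ)‖ := norm_add_le _ _
      _ = ‖w - (a : ℂ)‖ + 2 * a := by
          rw [Complex.norm_real, Real.norm_eq_abs, abs_of_pos (by linarith)]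
  have hXbound : ‖w - (a : ℂ)‖ ≤ 8/11 * a := by nlinarith
  have hre_bound : |H z - a| ≤ 8/11 * a := by
    have h1 : (w - (a : ℂ)).re = H z - a := by simp [Complex.sub_re, hwre]
    calc |H z - a| = |(w - (a : ℂ)).re| := by rw [h1]
      _ ≤ ‖w - (a : ℂ)‖ := Complex.abs_re_le_norm _
      _ ≤ 8/11 * a := hXbound
  have := abs_le.mp hre_bound
  linarith [this.1]

lemma sector_subset (a b : ℝ) : sectorS a b ⊆ sectorS' a b := by
  intro z hz
  have hlog : 0 < Real.log 3 := Real.log_pos (by norm_num)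
  exact ⟨by linarith [hz.1], by linarith [hz.2]⟩

lemma isOpen_sectorS' (a b : ℝ) : IsOpen (sectorS' a b) := by
  have h1 : IsOpen {z : ℂ | -Real.log 3 < z.im} :=
    isOpen_lt continuous_const Complex.continuous_im
  have h2 : IsOpen {z : ℂ | -Real.log 3 < b * z.re + a * z.im} :=
    isOpen_lt continuous_const
      ((continuous_const.mul Complex.continuous_re).add
        (continuous_const.mul Complex.continuous_im))
  exact h1.inter h2

lemma sector_ball {a b : ℝ} {z : ℂ} (hz : z ∈ sectorS a b) :
    closedBall z (Real.log 3 / (1 + |a| + |b|)) ⊆ sectorS' a b := by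
  intro w hw
  set δ : ℝ := Real.log 3 / (1 + |a| + |b|) with hδ
  have hlog : 0 < Real.log 3 := Real.log_pos (by norm_num)
  have hd : 0 < 1 + |a| + |b| := by positivity
  have hδpos : 0 < δ := by positivity
  have habs : ‖w - z‖ ≤ δ := by
    rw [← Complex.dist_eq]; exact mem_closedBall.mp hw
  have him : |w.im - z.im| ≤ δ := by
    calc |w.im - z.im| = |(w - z).im| := by rw [Complex.sub_im]
      _ ≤ ‖w - z‖ := Complex.abs_im_le_norm _
      _ ≤ δ := habs
  have hre : |w.re - z.re| ≤ δ := by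
    calc |w.re - z.re| = |(w - z).re| := by rw [Complex.sub_re]
      _ ≤ ‖w - z‖ := Complex.abs_re_le_norm _
      _ ≤ δ := habs
  have hδlog : δ ≤ Real.log 3 := by
    rw [hδ]
    exact div_le_self hlog.le (by linarith [abs_nonneg a, abs_nonneg b])
  have hab : (|a| + |b|) * δ ≤ Real.log 3 := by
    have h1 : (|a| + |b|) * δ ≤ (1 + |a| + |b|) * δ := by nlinarith [hδpos.le]
    have h2 : (1 + |a| + |b|) * δ = Real.log 3 := by
      rw [hδ]; field_simp
    linarith
  have h1 := abs_le.mp him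
  have h2 := abs_le.mp hre
  constructor
  · have := hz.1
    linarith
  · have := hz.2
    have hb : |b * (w.re - z.re)| ≤ |b| * δ := by
      rw [abs_mul]
      exact mul_le_mul_of_nonneg_left hre (abs_nonneg b)
    have ha' : |a * (w.im - z.im)| ≤ |a| * δ := by
      rw [abs_mul]
      exact mul_le_mul_of_nonneg_left him (abs_nonneg a)
    have hb' := (abs_le.mp hb).1
    have ha'' := (abs_le.mp ha').1
    have hexp : b * w.re + a * w.im =
        (b * z.re + a * z.im) + b * (w.re - z.re) + a * (w.im - z.im) := by ring
    rw [hexp]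
    nlinarith

lemma comb_pos {x y t : ℝ} (hx : 0 < x) (hy : 0 < y) (ht0 : 0 ≤ t) (ht1 : t ≤ 1) :
    0 < x + t * (y - x) := by
  rcases eq_or_lt_of_le ht0 with h | h
  · simp [← h, hx]
  · nlinarith [mul_pos h hy, mul_nonneg (sub_nonneg.mpr ht1) hx.le]

/-- Harnack chain: comparison of values of a positive harmonic function at two points
of the sector at distance at most `κ`. -/
lemma harnack_chain (a b : ℝ) (κ : ℝ) (hκ : 0 < κ) :
    ∃ c₁ : ℝ, 0 < c₁ ∧ ∀ H : ℂ → ℝ, PosHarmonic a b H →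
      ∀ ζ ζ' : ℂ, ζ ∈ sectorS a b → ζ' ∈ sectorS a b → dist ζ ζ' ≤ κ →
        H ζ ≤ c₁ * H ζ' := by
  set δ : ℝ := Real.log 3 / (1 + |a| + |b|) with hδ
  have hlog : 0 < Real.log 3 := Real.log_pos (by norm_num)
  have hδpos : 0 < δ := by positivity
  set m : ℕ := ⌈5 * κ / δ⌉₊ with hm
  have hmpos : 0 < m := Nat.ceil_pos.mpr (by positivity)
  have hmR : (0 : ℝ) < m := by exact_mod_cast hmpos
  refine ⟨4 ^ m, by positivity, ?_⟩
  rintro H ⟨hpos, hharm⟩ ζ ζ' hζ hζ' hdist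
  set p : ℕ → ℂ := fun j => ζ + (((j : ℝ) / m) : ℝ) • (ζ' - ζ) with hp
  have hmem : ∀ j, j ≤ m → p j ∈ sectorS a b := by
    intro j hj
    have ht0 : 0 ≤ (j : ℝ) / m := by positivity
    have ht1 : (j : ℝ) / m ≤ 1 := by
      rw [div_le_one hmR]; exact_mod_cast hj
    constructor
    · have hexp : (p j).im = ζ.im + ((j : ℝ) / m) * (ζ'.im - ζ.im) := by
        simp [hp, Complex.add_im, Complex.smul_im, Complex.sub_im]
      rw [hexp]
      exact comb_pos hζ.1 hζ'.1 ht0 ht1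
    · have hexp : b * (p j).re + a * (p j).im =
          (b * ζ.re + a * ζ.im) + ((j : ℝ) / m) *
            ((b * ζ'.re + a * ζ'.im) - (b * ζ.re + a * ζ.im)) := by
        simp [hp, Complex.add_re, Complex.add_im, Complex.smul_re, Complex.smul_im,
          Complex.sub_re, Complex.sub_im]
        ring
      rw [hexp]
      exact comb_pos hζ.2 hζ'.2 ht0 ht1
  have hstep : ∀ j, j < m → H (p j) ≤ 4 * H (p (j + 1)) := by
    intro j hj
    have hpj : p j ∈ sectorS a b := hmem j hj.le
    have hdist' : dist (p (j + 1)) (p j) ≤ δ / 5 := by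
      have hdiff : p (j + 1) - p j = ((1 : ℝ) / m) • (ζ' - ζ) := by
        show (ζ + (((j + 1 : ℕ) : ℝ) / m) • (ζ' - ζ)) - (ζ + (((j : ℝ)) / m) • (ζ' - ζ)) = _
        rw [add_sub_add_left_eq_sub, ← sub_smul]
        congr 1
        push_cast
        field_simp
        ring
      rw [dist_eq_norm, hdiff, norm_smul]
      have h1 : ‖(1 : ℝ) / m‖ = 1 / (m : ℝ) := by
        rw [Real.norm_eq_abs, abs_of_pos (by positivity)]
      rw [h1]
      have h2 : ‖ζ' - ζ‖ = dist ζ ζ' := by rw [dist_comm, dist_eq_norm]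
      rw [h2]
      have h3 : 5 * κ / δ ≤ (m : ℝ) := Nat.le_ceil _
      rw [div_mul_eq_mul_div, div_le_div_iff₀ hmR (by norm_num : (0:ℝ) < 5)]
      have h4 : 5 * κ ≤ (m : ℝ) * δ := by
        rw [div_le_iff₀ hδpos] at h3
        linarith
      calc 1 * dist ζ ζ' * 5 = 5 * dist ζ ζ' := by ring
        _ ≤ 5 * κ := by linarith
        _ ≤ (m : ℝ) * δ := h4
        _ = δ * (m : ℝ) := by ring
    exact harnack_step (isOpen_sectorS' a b) hharm hpos hδpos
      (sector_ball hpj) hdist'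
  have hind : ∀ j, j ≤ m → H ζ ≤ 4 ^ j * H (p j) := by
    intro j
    induction j with
    | zero =>
      intro _
      have : p 0 = ζ := by simp [hp]
      rw [this]; simp
    | succ k ih =>
      intro hk
      have hk' : k ≤ m := le_trans (Nat.le_succ k) hk
      have hklt : k < m := lt_of_lt_of_le (Nat.lt_succ_self k) hk
      calc H ζ ≤ 4 ^ k * H (p k) := ih hk'
        _ ≤ 4 ^ k * (4 * H (p (k + 1))) :=
          mul_le_mul_of_nonneg_left (hstep k hklt) (by positivity)
        _ = 4 ^ (k + 1) * H (p (k + 1)) := by ring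
  have hpm : p m = ζ' := by
    rw [hp]
    simp only
    rw [div_self (ne_of_gt hmR), one_smul, add_sub_cancel]
  have := hind m le_rfl
  rwa [hpm] at this

lemma counting (N κ : ℝ) (hN : 0 < N) (hκ : 0 < κ) :
    ∃ M : ℝ, 0 < M ∧ ∀ Z : ℂ → ℕ, NSparse N Z → ∀ w : ℂ,
      (∑' ζ : ℂ, Set.indicator (closedBall w κ) (fun ζ => ((Z ζ : ℝ≥0∞))) ζ) ≤
        ENNReal.ofReal M := by
  set n : ℕ := ⌈κ⌉₊ + 1 with hn
  set G : Finset (ℤ × ℤ) := Finset.Icc (-(n : ℤ)) n ×ˢ Finset.Icc (-(n : ℤ)) n with hG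
  refine ⟨(G.card : ℝ) * N, ?_, ?_⟩
  · have : (0 : ℝ) < G.card := by
      have : (0, 0) ∈ G := by
        simp [hG, Finset.mem_Icc]
      have h1 : 0 < G.card := Finset.card_pos.mpr ⟨_, this⟩
      exact_mod_cast h1
    positivity
  intro Z hZ w
  set ctr : ℤ × ℤ → ℂ := fun q => w + (q.1 : ℂ) + (q.2 : ℂ) * Complex.I with hctr
  have hcover : ∀ ζ : ℂ, Set.indicator (closedBall w κ) (fun ζ => ((Z ζ : ℝ≥0∞))) ζ ≤
      ∑ q ∈ G, Set.indicator (Metric.ball (ctr q) 1) (fun ζ => ((Z ζ : ℝ≥0∞))) ζ := by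
    intro ζ
    by_cases hmem : ζ ∈ closedBall w κ
    · rw [Set.indicator_of_mem hmem]
      set i : ℤ := round ((ζ - w).re) with hi
      set j : ℤ := round ((ζ - w).im) with hj
      have hdist : dist ζ w ≤ κ := mem_closedBall.mp hmem
      have habs : ‖ζ - w‖ ≤ κ := by rwa [← Complex.dist_eq]
      have hre : |(ζ - w).re| ≤ κ := le_trans (Complex.abs_re_le_norm _) habs
      have him : |(ζ - w).im| ≤ κ := le_trans (Complex.abs_im_le_norm _) habs
      have hri : |(ζ - w).re - (i : ℝ)| ≤ 1/2 := by
        rw [hi]; exact abs_sub_round _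
      have hrj : |(ζ - w).im - (j : ℝ)| ≤ 1/2 := by
        rw [hj]; exact abs_sub_round _
      have hiB : |(i : ℝ)| ≤ κ + 1/2 := by
        have := abs_sub_abs_le_abs_sub (i : ℝ) ((ζ - w).re)
        rw [abs_sub_comm] at hri
        linarith [abs_sub_abs_le_abs_sub (i : ℝ) ((ζ - w).re), abs_sub_comm (i:ℝ) ((ζ-w).re) ▸ hri]
      have hjB : |(j : ℝ)| ≤ κ + 1/2 := by
        rw [abs_sub_comm] at hrj
        linarith [abs_sub_abs_le_abs_sub (j : ℝ) ((ζ - w).im)]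
      have hnκ : κ + 1/2 ≤ (n : ℝ) := by
        have := Nat.le_ceil κ
        rw [hn]; push_cast; linarith
      have hiG : (i, j) ∈ G := by
        rw [hG, Finset.mem_product, Finset.mem_Icc, Finset.mem_Icc]
        constructor
        · constructor
          · have : -(n : ℝ) ≤ (i : ℝ) := by
              have := (abs_le.mp hiB).1; linarith
            exact_mod_cast this
          · have : (i : ℝ) ≤ (n : ℝ) := by
              have := (abs_le.mp hiB).2; linarith
            exact_mod_cast this
        · constructor
          · have : -(n : ℝ) ≤ (j : ℝ) := by
              have := (abs_le.mp hjB).1; linarith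
            exact_mod_cast this
          · have : (j : ℝ) ≤ (n : ℝ) := by
              have := (abs_le.mp hjB).2; linarith
            exact_mod_cast this
      have hζball : ζ ∈ Metric.ball (ctr (i, j)) 1 := by
        rw [Metric.mem_ball, Complex.dist_eq]
        have hdiffre : (ζ - ctr (i, j)).re = (ζ - w).re - (i : ℝ) := by
          simp [hctr, Complex.sub_re, Complex.add_re, Complex.mul_re]
          ring
        have hdiffim : (ζ - ctr (i, j)).im = (ζ - w).im - (j : ℝ) := by
          simp [hctr, Complex.sub_im, Complex.add_im, Complex.mul_im]
          ring
        have hsq : (‖ζ - ctr (i, j)‖)^2 ≤ 1/2 := by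
          rw [Complex.sq_norm, Complex.normSq_apply, hdiffre, hdiffim]
          have h1 := abs_le.mp hri
          have h2 := abs_le.mp hrj
          nlinarith
        nlinarith [norm_nonneg (ζ - ctr (i, j))]
      calc ((Z ζ : ℝ≥0∞)) =
          Set.indicator (Metric.ball (ctr (i, j)) 1) (fun ζ => ((Z ζ : ℝ≥0∞))) ζ :=
            (Set.indicator_of_mem hζball (fun ζ => ((Z ζ : ℝ≥0∞)))).symm
        _ ≤ ∑ q ∈ G, Set.indicator (Metric.ball (ctr q) 1) (fun ζ => ((Z ζ : ℝ≥0∞))) ζ :=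
            Finset.single_le_sum (f := fun q =>
              Set.indicator (Metric.ball (ctr q) 1) (fun ζ => ((Z ζ : ℝ≥0∞))) ζ)
              (fun q _ => zero_le) hiG
    · rw [Set.indicator_of_notMem hmem]
      exact zero_le
  calc (∑' ζ : ℂ, Set.indicator (closedBall w κ) (fun ζ => ((Z ζ : ℝ≥0∞))) ζ) ≤
      ∑' ζ : ℂ, ∑ q ∈ G, Set.indicator (Metric.ball (ctr q) 1) (fun ζ => ((Z ζ : ℝ≥0∞))) ζ :=
        ENNReal.tsum_le_tsum hcover
    _ = ∑ q ∈ G, ∑' ζ : ℂ, Set.indicator (Metric.ball (ctr q) 1) (fun ζ => ((Z ζ : ℝ≥0∞))) ζ :=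
        Summable.tsum_finsetSum (fun q _ => ENNReal.summable)
    _ ≤ ∑ _q ∈ G, ENNReal.ofReal N := Finset.sum_le_sum (fun q _ => hZ (ctr q))
    _ = G.card * ENNReal.ofReal N := by rw [Finset.sum_const, nsmul_eq_mul]
    _ = ENNReal.ofReal ((G.card : ℝ) * N) := by
        rw [ENNReal.ofReal_mul (by positivity)]
        congr 1
        rw [ENNReal.ofReal_natCast]

lemma tsum_fiberwise' (g : ℂ → ℂ) (F : ℂ → ℝ≥0∞) :
    ∑' ζ : ℂ, F ζ = ∑' w : ℂ, ∑' ζ : {ζ : ℂ // g ζ = w}, F ζ.1 := by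
  rw [← (Equiv.sigmaFiberEquiv g).tsum_eq F]
  have h1 : ∀ c : Σ w : ℂ, {x : ℂ // g x = w}, F ((Equiv.sigmaFiberEquiv g) c) = F c.2.1 :=
    fun _ => rfl
  rw [tsum_congr h1]
  exact ENNReal.tsum_sigma (fun w (ζ : {x : ℂ // g x = w}) => F ζ.1)


end AuxHarnack

/-- comparison of sums of a positive harmonic function over an `N`-sparse
family `Z` in `S` dominated by another family `Z'` in `S`. -/
theorem stmt6 (a b : ℝ) (hb : 0 < b) (N κ : ℝ) (hN : 0 < N) (hκ : 0 < κ) :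
    ∃ C : ℝ, 0 < C ∧
      ∀ H : ℂ → ℝ, PosHarmonic a b H →
        ∀ Z Z' : ℂ → ℕ,
          (∀ ζ, Z ζ ≠ 0 → ζ ∈ sectorS a b) → (∀ ζ, Z' ζ ≠ 0 → ζ ∈ sectorS a b) →
          NSparse N Z → DomBy κ Z Z' →
          (∑' ζ : ℂ, (Z ζ : ℝ≥0∞) * ENNReal.ofReal (H ζ)) ≤
            ENNReal.ofReal C * ∑' ζ : ℂ, (Z' ζ : ℝ≥0∞) * ENNReal.ofReal (H ζ) := by
  obtain ⟨c₁, hc₁, hchain⟩ := harnack_chain a b κ hκ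
  obtain ⟨M, hM, hcount⟩ := counting N κ hN hκ
  refine ⟨c₁ * M, by positivity, ?_⟩
  intro H hH Z Z' hZS hZ'S hsp hdom
  classical
  set g : ℂ → ℂ := fun ζ => if h : Z ζ ≠ 0 then Classical.choose (hdom ζ h) else ζ with hg
  have hgspec : ∀ ζ, Z ζ ≠ 0 → Z' (g ζ) ≠ 0 ∧ dist ζ (g ζ) ≤ κ := by
    intro ζ h
    have hgval : g ζ = Classical.choose (hdom ζ h) := dif_pos h
    rw [hgval]
    exact Classical.choose_spec (hdom ζ h)
  have step1 : ∀ ζ, (Z ζ : ℝ≥0∞) * ENNReal.ofReal (H ζ) ≤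
      ENNReal.ofReal c₁ * ((Z ζ : ℝ≥0∞) * ENNReal.ofReal (H (g ζ))) := by
    intro ζ
    by_cases h : Z ζ = 0
    · simp [h]
    · have hζS := hZS ζ h
      have hspec := hgspec ζ h
      have hgS := hZ'S (g ζ) hspec.1
      have hHle : H ζ ≤ c₁ * H (g ζ) := hchain H hH ζ (g ζ) hζS hgS hspec.2
      calc (Z ζ : ℝ≥0∞) * ENNReal.ofReal (H ζ) ≤
          (Z ζ : ℝ≥0∞) * ENNReal.ofReal (c₁ * H (g ζ)) :=
            mul_le_mul_right (ENNReal.ofReal_le_ofReal hHle) _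
        _ = ENNReal.ofReal c₁ * ((Z ζ : ℝ≥0∞) * ENNReal.ofReal (H (g ζ))) := by
            rw [ENNReal.ofReal_mul hc₁.le]; ring
  have key : (∑' ζ : ℂ, (Z ζ : ℝ≥0∞) * ENNReal.ofReal (H (g ζ))) ≤
      ENNReal.ofReal M * ∑' w : ℂ, (Z' w : ℝ≥0∞) * ENNReal.ofReal (H w) := by
    rw [tsum_fiberwise' g (fun ζ => (Z ζ : ℝ≥0∞) * ENNReal.ofReal (H (g ζ)))]
    rw [← ENNReal.tsum_mul_left]
    apply ENNReal.tsum_le_tsum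
    intro w
    have hfib : (∑' ζ : {ζ : ℂ // g ζ = w}, (Z ζ.1 : ℝ≥0∞) * ENNReal.ofReal (H (g ζ.1))) =
        (∑' ζ : {ζ : ℂ // g ζ = w}, (Z ζ.1 : ℝ≥0∞)) * ENNReal.ofReal (H w) := by
      rw [← ENNReal.tsum_mul_right]
      apply tsum_congr
      intro ζ
      rw [ζ.2]
    rw [hfib]
    by_cases hex : ∃ ζ, g ζ = w ∧ Z ζ ≠ 0
    · obtain ⟨ζ₀, hζ₀, hZζ₀⟩ := hex
      have hZ'w : Z' w ≠ 0 := hζ₀ ▸ (hgspec ζ₀ hZζ₀).1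
      have h1 : (1 : ℝ≥0∞) ≤ (Z' w : ℝ≥0∞) := by
        exact_mod_cast Nat.one_le_iff_ne_zero.mpr hZ'w
      have hsum : (∑' ζ : {ζ : ℂ // g ζ = w}, (Z ζ.1 : ℝ≥0∞)) ≤ ENNReal.ofReal M := by
        refine le_trans ?_ (hcount Z hsp w)
        have heq : (∑' ζ : {ζ : ℂ // g ζ = w}, (Z ζ.1 : ℝ≥0∞)) =
            ∑' ζ : ℂ, Set.indicator {ζ : ℂ | g ζ = w} (fun ζ => ((Z ζ : ℝ≥0∞))) ζ :=
          tsum_subtype {ζ : ℂ | g ζ = w} (fun ζ => ((Z ζ : ℝ≥0∞)))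
        rw [heq]
        apply ENNReal.tsum_le_tsum
        intro ζ
        by_cases hζ : g ζ = w
        · by_cases hZζ : Z ζ = 0
          · rw [Set.indicator_of_mem (show ζ ∈ {ζ : ℂ | g ζ = w} from hζ)]
            simp [hZζ]
          · have hdistζ : ζ ∈ closedBall w κ := by
              rw [mem_closedBall, ← hζ]; exact (hgspec ζ hZζ).2
            rw [Set.indicator_of_mem hdistζ]
            exact Set.indicator_apply_le (fun _ => le_rfl)
        · rw [Set.indicator_of_notMem (by simpa using hζ)]
          exact zero_le
      calc (∑' ζ : {ζ : ℂ // g ζ = w}, (Z ζ.1 : ℝ≥0∞)) * ENNReal.ofReal (H w) ≤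
          ENNReal.ofReal M * ENNReal.ofReal (H w) := mul_le_mul_left hsum _
        _ = ENNReal.ofReal M * (1 * ENNReal.ofReal (H w)) := by rw [one_mul]
        _ ≤ ENNReal.ofReal M * ((Z' w : ℝ≥0∞) * ENNReal.ofReal (H w)) :=
            mul_le_mul_right (mul_le_mul_left h1 _) _
    · have hzero : ∀ ζ : {ζ : ℂ // g ζ = w}, (Z ζ.1 : ℝ≥0∞) = 0 := by
        intro ζ
        by_contra h
        exact hex ⟨ζ.1, ζ.2, fun h0 => h (by rw [h0]; simp)⟩
      rw [tsum_congr hzero, tsum_zero, zero_mul]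
      exact zero_le
  calc (∑' ζ : ℂ, (Z ζ : ℝ≥0∞) * ENNReal.ofReal (H ζ)) ≤
      ∑' ζ : ℂ, ENNReal.ofReal c₁ * ((Z ζ : ℝ≥0∞) * ENNReal.ofReal (H (g ζ))) :=
        ENNReal.tsum_le_tsum step1
    _ = ENNReal.ofReal c₁ * ∑' ζ : ℂ, (Z ζ : ℝ≥0∞) * ENNReal.ofReal (H (g ζ)) :=
        ENNReal.tsum_mul_left
    _ ≤ ENNReal.ofReal c₁ *
        (ENNReal.ofReal M * ∑' w : ℂ, (Z' w : ℝ≥0∞) * ENNReal.ofReal (H w)) :=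
        mul_le_mul_right key _
    _ = ENNReal.ofReal (c₁ * M) * ∑' ζ : ℂ, (Z' ζ : ℝ≥0∞) * ENNReal.ofReal (H ζ) := by
        rw [ENNReal.ofReal_mul hc₁.le, mul_assoc]
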